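/- arXiv:2310.05781 — 6 statements merged into one kernel-verified Lean document; each statement's English description precedes it below -/
import Mathlib

section
/- Let λ < 0, φ : H → ℝ ∪ {+∞} proper, elements T̄₁,…,T̄_N ∈ H with c_λ(ϑ, T̄ᵢ) ∈ ℝ for all ϑ ∈ dom φ, and weights ρᵢ ≥ 0 summing to 1. Then for all ϑ ∈ dom φ, φ(ϑ) − Σᵢ ρᵢ c_λ(ϑ, T̄ᵢ) ≤ φ(ϑ) − c_λ(ϑ, Σᵢ ρᵢ T̄ᵢ); moreover if ϑ* satisfies Σᵢ ρᵢ T̄ᵢ ∈ ∂^{c_λ}φ(ϑ*), then φ(ϑ*) − Σᵢ ρᵢ c_λ(ϑ*, T̄ᵢ) ≤ −φ^{c_λ}(Σᵢ ρᵢ T̄ᵢ). -/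
/-- The coupling `c_λ(u,v)`. -/
noncomputable def clam {H : Type*} [NormedAddCommGroup H] [InnerProductSpace ℝ H]
    (lam : ℝ) (u v : H) : EReal :=
  if lam = 0 then ((inner ℝ u v : ℝ) : EReal)
  else if 0 < 1 + lam * (inner ℝ u v : ℝ) then
    ((lam⁻¹ * Real.log (1 + lam * (inner ℝ u v : ℝ)) : ℝ) : EReal)
  else ⊥

/-- The `c_λ`-conjugate. -/
noncomputable def clamConj {H : Type*} [NormedAddCommGroup H] [InnerProductSpace ℝ H]
    (lam : ℝ) (f : H → EReal) (v : H) : EReal :=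
  ⨆ u, clam lam u v - f u

/-- Case `λ < 0` of Proposition 6: the averaged coupling upper bound, and the bound
`φ(ϑ*) − Σᵢ ρᵢ c_λ(ϑ*, T̄ᵢ) ≤ −φ^{c_λ}(Σᵢ ρᵢ T̄ᵢ)` at a `c_λ`-subgradient point `ϑ*`. -/
theorem averaged_coupling_bounds_neg {H : Type*} [NormedAddCommGroup H]
    [InnerProductSpace ℝ H] (lam : ℝ) (hlam : lam < 0)
    (φ : H → EReal) (hbot : ∀ w, φ w ≠ ⊥)
    (N : ℕ) (T : Fin N → H) (ρ : Fin N → ℝ)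
    (hρ : ∀ i, 0 ≤ ρ i) (hsum : ∑ i, ρ i = 1)
    (hfin : ∀ ϑ, φ ϑ ≠ ⊤ → ∀ i, clam lam ϑ (T i) ≠ ⊥) :
    (∀ ϑ, φ ϑ ≠ ⊤ →
      φ ϑ - ∑ i, ((ρ i : EReal) * clam lam ϑ (T i))
        ≤ φ ϑ - clam lam ϑ (∑ i, ρ i • T i))
    ∧ (∀ ϑs : H, φ ϑs ≠ ⊤ →
        clamConj lam φ (∑ i, ρ i • T i) + φ ϑs = clam lam ϑs (∑ i, ρ i • T i) →
        φ ϑs - ∑ i, ((ρ i : EReal) * clam lam ϑs (T i))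
          ≤ - clamConj lam φ (∑ i, ρ i • T i)) := by
  have hlam0 : lam ≠ 0 := ne_of_lt hlam
  -- key lemma: real values and the core inequality
  have key : ∀ ϑ : H, φ ϑ ≠ ⊤ →
      ∃ b : ℝ, clam lam ϑ (∑ i, ρ i • T i) = (b : EReal) ∧
        (∑ i, ((ρ i : EReal) * clam lam ϑ (T i)))
          = ((∑ i, ρ i * (lam⁻¹ * Real.log (1 + lam * (inner ℝ ϑ (T i) : ℝ))) : ℝ) : EReal) ∧
        b ≤ ∑ i, ρ i * (lam⁻¹ * Real.log (1 + lam * (inner ℝ ϑ (T i) : ℝ))) := by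
    intro ϑ hϑ
    set t : Fin N → ℝ := fun i => (inner ℝ ϑ (T i) : ℝ) with ht
    have hpos : ∀ i, 0 < 1 + lam * t i := by
      intro i
      by_contra h
      push_neg at h
      exact hfin ϑ hϑ i (by simp [clam, hlam0, not_lt.mpr (show 1 + lam * (inner ℝ ϑ (T i) : ℝ) ≤ 0 from h), ht])
    have hinner : (inner ℝ ϑ (∑ i, ρ i • T i) : ℝ) = ∑ i, ρ i * t i := by
      rw [inner_sum]
      simp [real_inner_smul_right, ht]
    have hsum' : ∑ i, ρ i * (1 + lam * t i) = 1 + lam * ∑ i, ρ i * t i := by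
      calc ∑ i, ρ i * (1 + lam * t i) = ∑ i, (ρ i + lam * (ρ i * t i)) :=
            Finset.sum_congr rfl fun i _ => by ring
        _ = 1 + lam * ∑ i, ρ i * t i := by
            rw [Finset.sum_add_distrib, hsum, ← Finset.mul_sum]
    have hposS : 0 < 1 + lam * ∑ i, ρ i * t i := by
      rw [← hsum']
      obtain ⟨j, hj⟩ : ∃ j, ρ j ≠ 0 := by
        by_contra h
        push_neg at h
        simp [h] at hsum
      refine Finset.sum_pos' (fun i _ => mul_nonneg (hρ i) (hpos i).le) ⟨j, Finset.mem_univ j, ?_⟩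
      exact mul_pos (lt_of_le_of_ne (hρ j) (Ne.symm hj)) (hpos j)
    -- Jensen: log concave
    have hlog : ∑ i, ρ i • Real.log (1 + lam * t i)
        ≤ Real.log (∑ i, ρ i • (1 + lam * t i)) := by
      refine strictConcaveOn_log_Ioi.concaveOn.le_map_sum (fun i _ => hρ i) hsum
        (fun i _ => hpos i)
    simp only [smul_eq_mul] at hlog
    rw [hsum'] at hlog
    refine ⟨lam⁻¹ * Real.log (1 + lam * ∑ i, ρ i * t i), ?_, ?_, ?_⟩
    · simp [clam, hlam0, hinner, hposS]
    · calc ∑ i, ((ρ i : EReal) * clam lam ϑ (T i))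
          = ∑ i, ((ρ i * (lam⁻¹ * Real.log (1 + lam * (inner ℝ ϑ (T i) : ℝ))) : ℝ) : EReal) := by
            refine Finset.sum_congr rfl fun i _ => ?_
            have hc : clam lam ϑ (T i)
                = ((lam⁻¹ * Real.log (1 + lam * (inner ℝ ϑ (T i) : ℝ)) : ℝ) : EReal) := by
              simp [clam, hlam0, (show 0 < 1 + lam * (inner ℝ ϑ (T i) : ℝ) from hpos i), ht]
            rw [hc, ← EReal.coe_mul]
        _ = _ := (map_sum (⟨⟨Real.toEReal, EReal.coe_zero⟩,
            fun x y => EReal.coe_add x y⟩ : ℝ →+ EReal) _ _).symm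
    · have hinv : lam⁻¹ < 0 := inv_neg''.mpr hlam
      calc lam⁻¹ * Real.log (1 + lam * ∑ i, ρ i * t i)
          ≤ lam⁻¹ * ∑ i, ρ i * Real.log (1 + lam * t i) :=
            mul_le_mul_of_nonpos_left hlog hinv.le
        _ = ∑ i, ρ i * (lam⁻¹ * Real.log (1 + lam * t i)) := by
            rw [Finset.mul_sum]; refine Finset.sum_congr rfl fun i _ => by ring
  constructor
  · intro ϑ hϑ
    obtain ⟨b, hb, hS, hle⟩ := key ϑ hϑ
    obtain ⟨r, hr⟩ : ∃ r : ℝ, φ ϑ = (r : ℝ) := by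
      lift (φ ϑ) to ℝ using ⟨hϑ, hbot ϑ⟩ with r hr
      exact ⟨r, rfl⟩
    rw [hb, hS, hr, ← EReal.coe_sub, ← EReal.coe_sub, EReal.coe_le_coe_iff]
    linarith
  · intro ϑs hϑ heq
    obtain ⟨b, hb, hS, hle⟩ := key ϑs hϑ
    obtain ⟨r, hr⟩ : ∃ r : ℝ, φ ϑs = (r : ℝ) := by
      lift (φ ϑs) to ℝ using ⟨hϑ, hbot ϑs⟩ with r hr
      exact ⟨r, rfl⟩
    rw [hr, hb] at heq
    have hcc : clamConj lam φ (∑ i, ρ i • T i) = ((b - r : ℝ) : EReal) := by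
      rw [EReal.coe_sub, ← heq, EReal.add_sub_cancel_right]
    rw [hr, hS, hcc, ← EReal.coe_sub, ← EReal.coe_neg, EReal.coe_le_coe_iff]
    linarith
end

section
/- Let λ > 0, φ : H → ℝ ∪ {+∞} proper, elements T̄₁,…,T̄_N ∈ H with c_λ(ϑ, T̄ᵢ) ∈ ℝ for all ϑ ∈ dom φ, and weights ρᵢ ≥ 0 summing to 1. If ϑ* satisfies Σᵢ ρᵢ T̄ᵢ ∈ ∂^{c_λ}φ(ϑ*), then −φ^{c_λ}(Σᵢ ρᵢ T̄ᵢ) ≤ φ(ϑ) − Σᵢ ρᵢ c_λ(ϑ, T̄ᵢ) for all ϑ ∈ dom φ. -/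
lemma ereal_coe_sum {ι : Type*} (s : Finset ι) (f : ι → ℝ) :
    ((∑ i ∈ s, f i : ℝ) : EReal) = ∑ i ∈ s, (f i : EReal) :=
  map_sum (⟨⟨Real.toEReal, EReal.coe_zero⟩, fun x y => EReal.coe_add x y⟩ : ℝ →+ EReal) f s

/-- Case `λ > 0` of Proposition 6: if `Σᵢ ρᵢ T̄ᵢ ∈ ∂^{c_λ}φ(ϑ*)`, then
`−φ^{c_λ}(Σᵢ ρᵢ T̄ᵢ) ≤ φ(ϑ) − Σᵢ ρᵢ c_λ(ϑ, T̄ᵢ)` for every `ϑ ∈ dom φ`. -/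
theorem averaged_coupling_lower_bound_pos {H : Type*} [NormedAddCommGroup H]
    [InnerProductSpace ℝ H] (lam : ℝ) (hlam : 0 < lam)
    (φ : H → EReal) (hbot : ∀ w, φ w ≠ ⊥)
    (N : ℕ) (T : Fin N → H) (ρ : Fin N → ℝ)
    (hρ : ∀ i, 0 ≤ ρ i) (hsum : ∑ i, ρ i = 1)
    (hfin : ∀ ϑ, φ ϑ ≠ ⊤ → ∀ i, clam lam ϑ (T i) ≠ ⊥)
    (ϑs : H) (hϑs : φ ϑs ≠ ⊤)
    (hsub : clamConj lam φ (∑ i, ρ i • T i) + φ ϑs = clam lam ϑs (∑ i, ρ i • T i)) :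
    ∀ ϑ, φ ϑ ≠ ⊤ →
      - clamConj lam φ (∑ i, ρ i • T i)
        ≤ φ ϑ - ∑ i, ((ρ i : EReal) * clam lam ϑ (T i)) := by
  intro ϑ hϑ
  have hlam0 : lam ≠ 0 := ne_of_gt hlam
  set v : H := ∑ i, ρ i • T i with hv
  set S : EReal := clamConj lam φ v with hS
  -- the a i are positive
  set a : Fin N → ℝ := fun i => 1 + lam * (inner ℝ ϑ (T i) : ℝ) with ha
  have hapos : ∀ i, 0 < a i := by
    intro i
    by_contra hle
    exact hfin ϑ hϑ i (by simp only [clam, if_neg hlam0, if_neg (show ¬ 0 < 1 + lam * inner ℝ ϑ (T i) from hle)])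
  -- clam at T i is a real coercion
  have hclam_i : ∀ i, clam lam ϑ (T i) = ((lam⁻¹ * Real.log (a i) : ℝ) : EReal) := by
    intro i
    simp [clam, hlam0, (show 0 < 1 + lam * inner ℝ ϑ (T i) from hapos i), ha]
  -- inner with v
  have hinner : (inner ℝ ϑ v : ℝ) = ∑ i, ρ i * (inner ℝ ϑ (T i) : ℝ) := by
    simp [hv, inner_sum, real_inner_smul_right]
  have hsum_a : 1 + lam * (inner ℝ ϑ v : ℝ) = ∑ i, ρ i * a i := by
    rw [hinner, Finset.mul_sum]
    have h2 : ∑ i, ρ i * a i = ∑ i, (ρ i + ρ i * (lam * (inner ℝ ϑ (T i) : ℝ))) :=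
      Finset.sum_congr rfl fun i _ => by simp only [ha]; ring
    rw [h2, Finset.sum_add_distrib, hsum]
    congr 1
    exact Finset.sum_congr rfl fun i _ => by ring
  have hvpos : 0 < 1 + lam * (inner ℝ ϑ v : ℝ) := by
    rw [hsum_a]
    refine Finset.sum_pos' (fun i _ => mul_nonneg (hρ i) (hapos i).le) ?_
    by_contra h
    push_neg at h
    have : ∀ i ∈ Finset.univ, ρ i = 0 := fun i hi =>
      le_antisymm (by
        have := h i hi
        nlinarith [hapos i, hρ i]) (hρ i)
    have : (∑ i, ρ i) = 0 := Finset.sum_eq_zero this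
    rw [hsum] at this; norm_num at this
  have hclam_v : clam lam ϑ v = ((lam⁻¹ * Real.log (1 + lam * (inner ℝ ϑ v : ℝ)) : ℝ) : EReal) := by
    simp [clam, hlam0, hvpos]
  -- Jensen
  have hjensen : ∑ i, ρ i * (lam⁻¹ * Real.log (a i))
      ≤ lam⁻¹ * Real.log (1 + lam * (inner ℝ ϑ v : ℝ)) := by
    have hlog : ∑ i, ρ i * Real.log (a i) ≤ Real.log (∑ i, ρ i • a i) := by
      refine strictConcaveOn_log_Ioi.concaveOn.le_map_sum (fun i _ => hρ i)
        hsum (fun i _ => hapos i)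
    rw [hsum_a]
    calc ∑ i, ρ i * (lam⁻¹ * Real.log (a i))
        = lam⁻¹ * ∑ i, ρ i * Real.log (a i) := by
          rw [Finset.mul_sum]; exact Finset.sum_congr rfl fun i _ => by ring
      _ ≤ lam⁻¹ * Real.log (∑ i, ρ i * a i) := by
          apply mul_le_mul_of_nonneg_left _ (inv_nonneg.mpr hlam.le)
          simpa [smul_eq_mul] using hlog
  -- sum of EReal terms is a real coercion
  have hsum_clam : (∑ i, ((ρ i : EReal) * clam lam ϑ (T i)))
      = ((∑ i, ρ i * (lam⁻¹ * Real.log (a i)) : ℝ) : EReal) := by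
    rw [ereal_coe_sum]
    exact Finset.sum_congr rfl fun i _ => by rw [hclam_i i, ← EReal.coe_mul]
  -- φ ϑ is real
  lift φ ϑ to ℝ using ⟨hϑ, hbot ϑ⟩ with p hp
  -- key inequality from the sup
  have hle : clam lam ϑ v - φ ϑ ≤ S := le_iSup (fun u => clam lam u v - φ u) ϑ
  rw [← hp] at hle
  rw [hclam_v, ← EReal.coe_sub] at hle
  rw [hsum_clam]
  rcases eq_or_ne S ⊤ with hT | hT
  · simp [hT]
  · have hSbot : S ≠ ⊥ := ((EReal.bot_lt_coe _).trans_le hle).ne'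
    lift S to ℝ using ⟨hT, hSbot⟩ with s hs
    rw [← EReal.coe_neg, ← EReal.coe_sub, EReal.coe_le_coe_iff]
    rw [EReal.coe_le_coe_iff] at hle
    linarith
end

section
/- Let q_ϑ(x) = exp(c_λ(ϑ, T(x)) − φ_λ(ϑ)) be a member of the λ-exponential family with α = 1 − λ > 0, and let p be a probability density. Then the Rényi divergence satisfies RD_α(p, q_ϑ) = φ_λ(ϑ) − c_λ(ϑ, p^{(α)}_{|S_ϑ}(T)) − H_α(p_{|S_ϑ}), where p_{|S_ϑ} is the restriction of p to the support S_ϑ of q_ϑ, p^{(α)} denotes the escort with exponent α, and H_α is the Rényi entropy. -/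
open MeasureTheory

/-- Proposition 1, Equation (18): for a member `q_ϑ` of the `λ`-exponential family with
`α = 1 − λ > 0` and a compatible density `p`,
`RD_α(p, q_ϑ) = φ_λ(ϑ) − c_λ(ϑ, p^{(α)}_{|S_ϑ}(T)) − H_α(p_{|S_ϑ})`. -/
theorem renyi_divergence_rewriting {X : Type*} [MeasurableSpace X] (m : Measure X)
    {H : Type*} [NormedAddCommGroup H] [InnerProductSpace ℝ H] [FiniteDimensional ℝ H]
    (T : X → H) (ϑ : H) (lam α : ℝ) (hlam : lam ≠ 0) (hα : 0 < α) (hal : α = 1 - lam)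
    -- the target probability density
    (p : X → ℝ) (hp0 : ∀ x, 0 ≤ p x) (hp1 : ∫ x, p x ∂m = 1)
    -- the unnormalized density of the family member, with `exp(-∞) = 0` outside `S_ϑ`
    (f : X → ℝ)
    (hf : ∀ x, f x = if 0 < 1 + lam * (inner ℝ ϑ (T x) : ℝ) then
        Real.exp (lam⁻¹ * Real.log (1 + lam * (inner ℝ ϑ (T x) : ℝ))) else 0)
    (hfint : Integrable f m) (hfpos : 0 < ∫ x, f x ∂m)
    -- the λ-log-partition value and the normalized density q_ϑ
    (φ : ℝ) (hφ : φ = Real.log (∫ x, f x ∂m))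
    (q : X → ℝ) (hq : ∀ x, q x = Real.exp (-φ) * f x)
    -- the restriction of p to the support S_ϑ of q_ϑ
    (pS : X → ℝ)
    (hpS : ∀ x, pS x = if 0 < 1 + lam * (inner ℝ ϑ (T x) : ℝ) then p x else 0)
    -- compatibility of p with q_ϑ
    (hint : Integrable (fun x => pS x ^ α) m) (hpos : 0 < ∫ x, pS x ^ α ∂m)
    (hintT : Integrable (fun x => (pS x ^ α) • T x) m)
    -- the escort moment of the restricted density
    (η : H) (hη : η = (∫ x, pS x ^ α ∂m)⁻¹ • ∫ x, (pS x ^ α) • T x ∂m) :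
    (α - 1)⁻¹ * Real.log (∫ x, pS x ^ α * q x ^ (1 - α) ∂m)
      = φ - lam⁻¹ * Real.log (1 + lam * (inner ℝ ϑ η : ℝ))
        - (1 - α)⁻¹ * Real.log (∫ x, pS x ^ α ∂m) := by
  have hlam' : 1 - α = lam := by rw [hal]; ring
  set u : X → ℝ := fun x => 1 + lam * (inner ℝ ϑ (T x) : ℝ) with hu
  set C := ∫ x, pS x ^ α ∂m with hC
  set I := ∫ x, (pS x ^ α) • T x ∂m with hI
  -- pS is nonnegative and vanishes off the support
  have hpS0 : ∀ x, 0 ≤ pS x := by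
    intro x; rw [hpS x]; split <;> [exact hp0 x; exact le_rfl]
  have hpSzero : ∀ x, ¬ (0 < u x) → pS x = 0 := by
    intro x hx; rw [hpS x, if_neg hx]
  -- pointwise rewriting of the integrand
  have hpoint : ∀ x, pS x ^ α * q x ^ (1 - α)
      = Real.exp (-(1 - α) * φ) * (pS x ^ α * u x) := by
    intro x
    by_cases hx : 0 < u x
    · have hf' : f x = Real.exp (lam⁻¹ * Real.log (u x)) := by
        rw [hf x, if_pos hx]
      rw [hq x, hf', ← Real.exp_add,
        Real.rpow_def_of_pos (Real.exp_pos _), Real.log_exp]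
      have harith : (-φ + lam⁻¹ * Real.log (u x)) * (1 - α)
          = -(1 - α) * φ + Real.log (u x) := by
        rw [hlam']; field_simp
      rw [harith, Real.exp_add, Real.exp_log hx]
      ring
    · rw [hpSzero x hx, Real.zero_rpow hα.ne']
      ring
  -- integrability of the inner-product part
  have hg2 : Integrable (fun x => (inner ℝ ϑ ((pS x ^ α) • T x) : ℝ)) m :=
    hintT.const_inner ϑ
  -- the integral of pS^α * u
  have hInt : ∫ x, pS x ^ α * u x ∂m = C + lam * (inner ℝ ϑ I : ℝ) := by
    have h1 : ∀ x, pS x ^ α * u x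
        = pS x ^ α + lam * (inner ℝ ϑ ((pS x ^ α) • T x) : ℝ) := by
      intro x; rw [real_inner_smul_right]; simp only [hu]; ring
    simp_rw [h1]
    rw [integral_add hint (hg2.const_mul lam), integral_const_mul,
      integral_inner hintT]
  -- positivity of that integral
  have hnn : ∀ x, 0 ≤ pS x ^ α * u x := by
    intro x
    by_cases hx : 0 < u x
    · exact mul_nonneg (Real.rpow_nonneg (hpS0 x) α) hx.le
    · rw [hpSzero x hx, Real.zero_rpow hα.ne', zero_mul]
  have hsupp : Function.support (fun x => pS x ^ α * u x)
      = Function.support (fun x => pS x ^ α) := by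
    ext x
    simp only [Function.mem_support, mul_ne_zero_iff]
    constructor
    · rintro ⟨h1, _⟩; exact h1
    · intro h1
      refine ⟨h1, ?_⟩
      have hx : 0 < u x := by
        by_contra hx
        exact h1 (by rw [hpSzero x hx, Real.zero_rpow hα.ne'])
      exact hx.ne'
    -- done
  have hgint : Integrable (fun x => pS x ^ α * u x) m := by
    have h1 : (fun x => pS x ^ α * u x)
        = fun x => pS x ^ α + lam * (inner ℝ ϑ ((pS x ^ α) • T x) : ℝ) := by
      funext x; rw [real_inner_smul_right]; simp only [hu]; ring
    rw [h1]; exact hint.add (hg2.const_mul lam)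
  have hgpos : 0 < ∫ x, pS x ^ α * u x ∂m := by
    rw [integral_pos_iff_support_of_nonneg hnn hgint, hsupp,
      ← integral_pos_iff_support_of_nonneg
        (fun x => Real.rpow_nonneg (hpS0 x) α) hint]
    exact hpos
  -- relate to η
  set K := 1 + lam * (inner ℝ ϑ η : ℝ) with hK
  have hCpos : (0 : ℝ) < C := hpos
  have hCK : C * K = C + lam * (inner ℝ ϑ I : ℝ) := by
    rw [hK, hη, real_inner_smul_right]
    field_simp
  have hKpos : 0 < K := by
    have h := hgpos
    rw [hInt, ← hCK] at h
    have hK' : K = C⁻¹ * (C * K) := by field_simp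
    rw [hK']
    exact mul_pos (inv_pos.mpr hCpos) h
  -- put everything together
  have hIeq : ∫ x, pS x ^ α * q x ^ (1 - α) ∂m
      = Real.exp (-(1 - α) * φ) * (C * K) := by
    simp_rw [hpoint]
    rw [integral_const_mul, hInt, hCK]
  rw [hIeq, Real.log_mul (Real.exp_pos _).ne' (mul_pos hCpos hKpos).ne',
    Real.log_exp, Real.log_mul hCpos.ne' hKpos.ne']
  have hα1 : α - 1 = -lam := by rw [hal]; ring
  rw [hα1, hlam', inv_neg, neg_mul, neg_mul]
  have h1 : lam⁻¹ * lam = 1 := inv_mul_cancel₀ hlam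
  field_simp
  nlinarith [h1]
end

section
/- Under the hypotheses that φ_λ is proper, all densities q_ϑ in the λ-exponential family share a common support, and each q_ϑ is compatible with the family, the Rényi divergence between two members satisfies RD_α(q_{ϑ'}, q_ϑ) = φ_λ(ϑ) − φ_λ(ϑ') − c_λ(ϑ, q_{ϑ'}^{(α)}(T)) + c_λ(ϑ', q_{ϑ'}^{(α)}(T)), i.e. it is a generalized Bregman divergence induced by φ_λ under the coupling c_λ. -/
open MeasureTheory

/-- The Rényi divergence between two members of the `λ`-exponential family is the
generalized Bregman divergence induced by `φ_λ` under the coupling `c_λ`: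
`RD_α(q_{ϑ'}, q_ϑ) = φ_λ(ϑ) − φ_λ(ϑ') − c_λ(ϑ, q_{ϑ'}^{(α)}(T)) + c_λ(ϑ', q_{ϑ'}^{(α)}(T))`. -/
theorem renyi_divergence_bregman_form {X : Type*} [MeasurableSpace X] (m : Measure X)
    {H : Type*} [NormedAddCommGroup H] [InnerProductSpace ℝ H] [FiniteDimensional ℝ H]
    (T : X → H) (ϑ ϑ' : H) (lam α : ℝ) (hlam : lam ≠ 0) (hα : 0 < α) (hal : α = 1 - lam)
    -- unnormalized densities with convention `exp(-∞) = 0`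
    (f f' : X → ℝ)
    (hf : ∀ x, f x = if 0 < 1 + lam * (inner ℝ ϑ (T x) : ℝ) then
        Real.exp (lam⁻¹ * Real.log (1 + lam * (inner ℝ ϑ (T x) : ℝ))) else 0)
    (hf' : ∀ x, f' x = if 0 < 1 + lam * (inner ℝ ϑ' (T x) : ℝ) then
        Real.exp (lam⁻¹ * Real.log (1 + lam * (inner ℝ ϑ' (T x) : ℝ))) else 0)
    -- properness of the λ-log-partition at ϑ and ϑ'
    (hfint : Integrable f m) (hfpos : 0 < ∫ x, f x ∂m)
    (hfint' : Integrable f' m) (hfpos' : 0 < ∫ x, f' x ∂m)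
    (φϑ φϑ' : ℝ) (hφϑ : φϑ = Real.log (∫ x, f x ∂m)) (hφϑ' : φϑ' = Real.log (∫ x, f' x ∂m))
    (q q' : X → ℝ) (hq : ∀ x, q x = Real.exp (-φϑ) * f x)
    (hq' : ∀ x, q' x = Real.exp (-φϑ') * f' x)
    -- common support condition
    (hsupp : ∀ x, (0 < 1 + lam * (inner ℝ ϑ (T x) : ℝ)) ↔ (0 < 1 + lam * (inner ℝ ϑ' (T x) : ℝ)))
    -- compatibility of q_{ϑ'} with the family
    (hint : Integrable (fun x => q' x ^ α) m) (hpos : 0 < ∫ x, q' x ^ α ∂m)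
    (hintT : Integrable (fun x => (q' x ^ α) • T x) m)
    -- escort moment of q_{ϑ'}
    (η' : H) (hη' : η' = (∫ x, q' x ^ α ∂m)⁻¹ • ∫ x, (q' x ^ α) • T x ∂m) :
    (α - 1)⁻¹ * Real.log (∫ x, q' x ^ α * q x ^ (1 - α) ∂m)
      = φϑ - φϑ' - lam⁻¹ * Real.log (1 + lam * (inner ℝ ϑ η' : ℝ))
        + lam⁻¹ * Real.log (1 + lam * (inner ℝ ϑ' η' : ℝ)) := by
  have h1a : (1:ℝ) - α = lam := by rw [hal]; ring
  have hα1 : α - 1 = -lam := by rw [hal]; ring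
  have hα0 : α ≠ 0 := ne_of_gt hα
  set Z := ∫ x, q' x ^ α ∂m with hZ
  set A := 1 + lam * (inner ℝ ϑ η' : ℝ) with hA
  set B := 1 + lam * (inner ℝ ϑ' η' : ℝ) with hB
  -- basic pointwise facts
  have hq'zero : ∀ x, ¬ (0 < 1 + lam * (inner ℝ ϑ (T x) : ℝ)) → q' x = 0 := by
    intro x hx
    rw [hq' x, hf' x, if_neg (fun h => hx ((hsupp x).mpr h)), mul_zero]
  have hqzero : ∀ x, ¬ (0 < 1 + lam * (inner ℝ ϑ (T x) : ℝ)) → q x = 0 := by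
    intro x hx
    rw [hq x, hf x, if_neg hx, mul_zero]
  have hqval : ∀ x, (0 < 1 + lam * (inner ℝ ϑ (T x) : ℝ)) →
      q x = Real.exp (-φϑ + lam⁻¹ * Real.log (1 + lam * (inner ℝ ϑ (T x) : ℝ))) := by
    intro x hx
    rw [hq x, hf x, if_pos hx, ← Real.exp_add]
  have hq'val : ∀ x, (0 < 1 + lam * (inner ℝ ϑ (T x) : ℝ)) →
      q' x = Real.exp (-φϑ' + lam⁻¹ * Real.log (1 + lam * (inner ℝ ϑ' (T x) : ℝ))) := by
    intro x hx
    rw [hq' x, hf' x, if_pos ((hsupp x).mp hx), ← Real.exp_add]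
  have hq0 : ∀ x, 0 ≤ q x := by
    intro x
    by_cases hx : 0 < 1 + lam * (inner ℝ ϑ (T x) : ℝ)
    · rw [hqval x hx]; exact (Real.exp_pos _).le
    · rw [hqzero x hx]
  have hq'0 : ∀ x, 0 ≤ q' x := by
    intro x
    by_cases hx : 0 < 1 + lam * (inner ℝ ϑ (T x) : ℝ)
    · rw [hq'val x hx]; exact (Real.exp_pos _).le
    · rw [hq'zero x hx]
  have hexp_rpow : ∀ (a b : ℝ), (Real.exp a) ^ b = Real.exp (a * b) := by
    intro a b
    rw [Real.rpow_def_of_pos (Real.exp_pos _), Real.log_exp]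
  -- key pointwise identity A
  have keyA : ∀ x, q' x ^ α * q x ^ lam
      = Real.exp (-(lam * φϑ)) * (q' x ^ α * (1 + lam * (inner ℝ ϑ (T x) : ℝ))) := by
    intro x
    by_cases hx : 0 < 1 + lam * (inner ℝ ϑ (T x) : ℝ)
    · rw [hqval x hx, hexp_rpow]
      rw [show (-φϑ + lam⁻¹ * Real.log (1 + lam * (inner ℝ ϑ (T x) : ℝ))) * lam
          = -(lam * φϑ) + Real.log (1 + lam * (inner ℝ ϑ (T x) : ℝ)) by field_simp]
      rw [Real.exp_add, Real.exp_log hx]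
      ring
    · rw [hqzero x hx, hq'zero x hx, Real.zero_rpow hα0, Real.zero_rpow hlam]
      ring
  -- key pointwise identity B
  have keyB : ∀ x, q' x ^ α * (1 + lam * (inner ℝ ϑ' (T x) : ℝ))
      = Real.exp (lam * φϑ') * q' x := by
    intro x
    by_cases hx : 0 < 1 + lam * (inner ℝ ϑ (T x) : ℝ)
    · have hx' := (hsupp x).mp hx
      have hL : q' x ^ α * (1 + lam * (inner ℝ ϑ' (T x) : ℝ))
          = Real.exp ((-φϑ' + lam⁻¹ * Real.log (1 + lam * (inner ℝ ϑ' (T x) : ℝ))) * α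
              + Real.log (1 + lam * (inner ℝ ϑ' (T x) : ℝ))) := by
        rw [hq'val x hx, hexp_rpow, Real.exp_add, Real.exp_log hx']
      have hR : Real.exp (lam * φϑ') * q' x
          = Real.exp (lam * φϑ' + (-φϑ' + lam⁻¹ * Real.log (1 + lam * (inner ℝ ϑ' (T x) : ℝ)))) := by
        rw [hq'val x hx, ← Real.exp_add]
      rw [hL, hR]
      congr 1
      rw [hal]
      field_simp
      ring
    · rw [hq'zero x hx, Real.zero_rpow hα0]
      ring
  -- integrability of the escort-tilted integrand
  have hinner : Integrable (fun x => (inner ℝ ϑ ((q' x ^ α) • T x) : ℝ)) m :=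
    hintT.const_inner ϑ
  have hinner' : Integrable (fun x => (inner ℝ ϑ' ((q' x ^ α) • T x) : ℝ)) m :=
    hintT.const_inner ϑ'
  have hInt1 : Integrable (fun x => q' x ^ α * (1 + lam * (inner ℝ ϑ (T x) : ℝ))) m := by
    have := hint.add (hinner.const_mul lam)
    refine this.congr (ae_of_all _ fun x => ?_)
    simp only [Pi.add_apply, real_inner_smul_right]
    ring
  have hInt1' : Integrable (fun x => q' x ^ α * (1 + lam * (inner ℝ ϑ' (T x) : ℝ))) m := by
    have := hint.add (hinner'.const_mul lam)
    refine this.congr (ae_of_all _ fun x => ?_)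
    simp only [Pi.add_apply, real_inner_smul_right]
    ring
  have hZne : Z ≠ 0 := ne_of_gt hpos
  -- integral identity C (for any parameter)
  have hC : ∀ (c : H), ∫ x, q' x ^ α * (1 + lam * (inner ℝ c (T x) : ℝ)) ∂m
      = Z * (1 + lam * (inner ℝ c η' : ℝ)) := by
    intro c
    have hci : Integrable (fun x => (inner ℝ c ((q' x ^ α) • T x) : ℝ)) m :=
      hintT.const_inner c
    have step1 : ∫ x, q' x ^ α * (1 + lam * (inner ℝ c (T x) : ℝ)) ∂m
        = ∫ x, (q' x ^ α + lam * (inner ℝ c ((q' x ^ α) • T x) : ℝ)) ∂m := by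
      congr 1
      funext x
      simp only [real_inner_smul_right]
      ring
    rw [step1, integral_add hint (hci.const_mul lam), integral_const_mul,
      integral_inner hintT c, hη', real_inner_smul_right]
    rw [← hZ]
    field_simp
  -- value of ∫ q'
  have hq'int : Integrable q' m := by
    have := hfint'.const_mul (Real.exp (-φϑ'))
    exact this.congr (ae_of_all _ fun x => (hq' x).symm)
  have hq'one : ∫ x, q' x ∂m = 1 := by
    have : ∫ x, q' x ∂m = Real.exp (-φϑ') * ∫ x, f' x ∂m := by
      rw [← integral_const_mul]
      congr 1
      funext x
      exact hq' x
    rw [this, hφϑ', Real.exp_neg, Real.exp_log hfpos', inv_mul_cancel₀ (ne_of_gt hfpos')]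
  -- the two integral evaluations
  have hBval : Z * B = Real.exp (lam * φϑ') := by
    rw [hB, ← hC ϑ']
    calc ∫ x, q' x ^ α * (1 + lam * (inner ℝ ϑ' (T x) : ℝ)) ∂m
        = ∫ x, Real.exp (lam * φϑ') * q' x ∂m := by
          congr 1; funext x; exact keyB x
      _ = Real.exp (lam * φϑ') * ∫ x, q' x ∂m := integral_const_mul _ _
      _ = Real.exp (lam * φϑ') := by rw [hq'one, mul_one]
  have hAval : ∫ x, q' x ^ α * q x ^ lam ∂m = Real.exp (-(lam * φϑ)) * (Z * A) := by
    calc ∫ x, q' x ^ α * q x ^ lam ∂m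
        = ∫ x, Real.exp (-(lam * φϑ)) * (q' x ^ α * (1 + lam * (inner ℝ ϑ (T x) : ℝ))) ∂m := by
          congr 1; funext x; exact keyA x
      _ = Real.exp (-(lam * φϑ)) * ∫ x, q' x ^ α * (1 + lam * (inner ℝ ϑ (T x) : ℝ)) ∂m :=
          integral_const_mul _ _
      _ = Real.exp (-(lam * φϑ)) * (Z * A) := by rw [hC ϑ, hA]
  -- positivity of B
  have hBpos : 0 < B := by
    have : B = Real.exp (lam * φϑ') / Z := by
      field_simp
      linarith [hBval]
    rw [this]
    exact div_pos (Real.exp_pos _) hpos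
  -- positivity of the Rényi integral
  have hIntP : Integrable (fun x => q' x ^ α * q x ^ lam) m := by
    have := hInt1.const_mul (Real.exp (-(lam * φϑ)))
    exact this.congr (ae_of_all _ fun x => (keyA x).symm)
  have hnnP : ∀ x, 0 ≤ q' x ^ α * q x ^ lam := fun x =>
    mul_nonneg (Real.rpow_nonneg (hq'0 x) _) (Real.rpow_nonneg (hq0 x) _)
  have hsupEq : Function.support (fun x => q' x ^ α * q x ^ lam)
      = Function.support (fun x => q' x ^ α) := by
    ext x
    simp only [Function.mem_support]
    constructor
    · intro h h0
      exact h (by rw [h0, zero_mul])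
    · intro h
      by_cases hx : 0 < 1 + lam * (inner ℝ ϑ (T x) : ℝ)
      · have hqx : 0 < q x := by rw [hqval x hx]; exact Real.exp_pos _
        exact mul_ne_zero h (ne_of_gt (Real.rpow_pos_of_pos hqx _))
      · exact absurd (by rw [hq'zero x hx, Real.zero_rpow hα0]) h
  have hPosI : 0 < ∫ x, q' x ^ α * q x ^ lam ∂m := by
    rw [integral_pos_iff_support_of_nonneg_ae (ae_of_all _ hnnP) hIntP, hsupEq]
    exact (integral_pos_iff_support_of_nonneg_ae
      (ae_of_all _ fun x => Real.rpow_nonneg (hq'0 x) _) hint).mp hpos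
  -- positivity of A
  have hApos : 0 < A := by
    have hAv : A = Real.exp (lam * φϑ) * (∫ x, q' x ^ α * q x ^ lam ∂m) / Z := by
      rw [hAval, Real.exp_neg]
      field_simp
    rw [hAv]
    exact div_pos (mul_pos (Real.exp_pos _) hPosI) hpos
  -- relation between logs
  have hlogB : Real.log Z + Real.log B = lam * φϑ' := by
    rw [← Real.log_mul hZne (ne_of_gt hBpos), hBval, Real.log_exp]
  -- final computation
  rw [h1a, hα1, hAval, Real.log_mul (Real.exp_ne_zero _) (ne_of_gt (mul_pos hpos hApos)),
    Real.log_exp, Real.log_mul hZne (ne_of_gt hApos)]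
  rw [show Real.log Z = lam * φϑ' - Real.log B by linarith [hlogB], inv_neg]
  field_simp
  ring
end

section
/- Let p be a d-dimensional Student density with ν_p > 0 degrees of freedom, location μ_p and positive-definite shape Σ_p, and let α = 1 + 2/(ν+d) for some ν > 0. Then the escort density p^{(α)} ∝ p^α is again a Student density with degrees of freedom ν^{(α)} = ν_p + 2(ν_p+d)/(ν+d), location μ_p, and shape (ν_p/ν^{(α)}) Σ_p. -/
open MeasureTheory Matrix

section EscortAux

open Set Real Module

private lemma escort_real_beta {u v : ℝ} (hu : 0 < u) (hv : 0 < v) :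
    ∫ t in Ioo (0:ℝ) 1, t ^ (u-1) * (1-t) ^ (v-1) = Gamma u * Gamma v / Gamma (u+v) := by
  have key : Complex.betaIntegral u v
      = ((∫ t in Ioo (0:ℝ) 1, t ^ (u-1) * (1-t) ^ (v-1) : ℝ) : ℂ) := by
    rw [Complex.betaIntegral]
    rw [show (∫ t in Ioo (0:ℝ) 1, t ^ (u-1) * (1-t) ^ (v-1))
        = ∫ t in (0:ℝ)..1, t ^ (u-1) * (1-t) ^ (v-1) by
      rw [intervalIntegral.integral_of_le zero_le_one, integral_Ioc_eq_integral_Ioo]]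
    rw [← intervalIntegral.integral_ofReal]
    apply intervalIntegral.integral_congr
    intro x hx
    rw [uIcc_of_le zero_le_one] at hx
    obtain ⟨hx0, hx1⟩ := hx
    beta_reduce
    rw [show ((u:ℂ)-1) = ((u-1:ℝ):ℂ) by push_cast; ring,
      show ((v:ℂ)-1) = ((v-1:ℝ):ℂ) by push_cast; ring,
      ← Complex.ofReal_cpow hx0]
    rw [show (1 - (x:ℂ)) = ((1-x:ℝ):ℂ) by push_cast; ring,
      ← Complex.ofReal_cpow (by linarith : (0:ℝ) ≤ 1 - x), ← Complex.ofReal_mul]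
  have h := Complex.Gamma_mul_Gamma_eq_betaIntegral
    (s := (u:ℂ)) (t := (v:ℂ)) (by simpa using hu) (by simpa using hv)
  rw [key, ← Complex.ofReal_add, Complex.Gamma_ofReal, Complex.Gamma_ofReal,
    Complex.Gamma_ofReal, ← Complex.ofReal_mul, ← Complex.ofReal_mul] at h
  have h' := Complex.ofReal_injective h
  have hG : Gamma (u+v) ≠ 0 := (Real.Gamma_pos_of_pos (by linarith)).ne'
  field_simp [hG] at h' ⊢
  linarith [h']

private lemma escort_beta_Ioi {u v : ℝ} (hu : 0 < u) (hv : 0 < v) :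
    ∫ y in Ioi (0:ℝ), y ^ (2*u-1) * (1+y^2) ^ (-(u+v))
      = Gamma u * Gamma v / (2 * Gamma (u+v)) := by
  have himg : (fun y : ℝ => y^2/(1+y^2)) '' Ioi 0 = Ioo 0 1 := by
    apply Subset.antisymm
    · rintro t ⟨y, hy, rfl⟩
      have hy : (0:ℝ) < y := hy
      have hc : (0:ℝ) < 1 + y^2 := by positivity
      constructor
      · positivity
      · rw [div_lt_one hc]; nlinarith
    · rintro t ⟨ht0, ht1⟩
      refine ⟨Real.sqrt (t/(1-t)), ?_, ?_⟩
      · have : (0:ℝ) < t/(1-t) := by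
          apply div_pos ht0; linarith
        exact Real.sqrt_pos.mpr this
      · have h1t : (0:ℝ) < 1 - t := by linarith
        show Real.sqrt (t/(1-t)) ^ 2 / (1 + Real.sqrt (t/(1-t)) ^ 2) = t
        rw [Real.sq_sqrt (le_of_lt (div_pos ht0 h1t))]
        field_simp
        ring
  have hderiv : ∀ y ∈ Ioi (0:ℝ), HasDerivWithinAt (fun y : ℝ => y^2/(1+y^2))
      (2*y/(1+y^2)^2) (Ioi 0) y := by
    intro y _
    have hc : (1:ℝ) + y^2 ≠ 0 := by positivity
    have h := (hasDerivAt_pow 2 y).div ((hasDerivAt_pow 2 y).const_add 1) hc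
    refine (h.congr_deriv ?_).hasDerivWithinAt
    ring
  have hinj : InjOn (fun y : ℝ => y^2/(1+y^2)) (Ioi 0) := by
    intro a ha b hb hab
    simp only at hab
    have ha : (0:ℝ) < a := ha
    have hb : (0:ℝ) < b := hb
    have hca : (0:ℝ) < 1 + a^2 := by positivity
    have hcb : (0:ℝ) < 1 + b^2 := by positivity
    rw [div_eq_div_iff hca.ne' hcb.ne'] at hab
    nlinarith
  have key := integral_image_eq_integral_abs_deriv_smul measurableSet_Ioi hderiv hinj
    (fun t => t ^ (u-1) * (1-t) ^ (v-1))
  rw [himg, escort_real_beta hu hv] at key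
  have ptwise : ∀ y ∈ Ioi (0:ℝ),
      |2*y/(1+y^2)^2| • ((y^2/(1+y^2)) ^ (u-1) * (1 - y^2/(1+y^2)) ^ (v-1))
        = 2 * (y ^ (2*u-1) * (1+y^2) ^ (-(u+v))) := by
    intro y hy
    have hy : (0:ℝ) < y := hy
    set c : ℝ := 1 + y^2 with hcdef
    have hc : (0:ℝ) < c := by rw [hcdef]; positivity
    have h1 : 1 - y^2/c = c⁻¹ := by rw [hcdef]; field_simp; ring
    have e1 : (y^2/c) ^ (u-1) = y ^ (2*(u-1)) * c ^ (-(u-1)) := by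
      rw [Real.div_rpow (sq_nonneg y) hc.le, ← Real.rpow_natCast y 2,
        ← Real.rpow_mul hy.le, div_eq_mul_inv, ← Real.rpow_neg hc.le]
      norm_num
    have e2 : (c⁻¹) ^ (v-1) = c ^ (-(v-1)) := by
      rw [Real.inv_rpow hc.le, ← Real.rpow_neg hc.le]
    have e3 : 2*y/c^2 = 2 * y ^ (1:ℝ) * c ^ (-2:ℝ) := by
      rw [Real.rpow_one, show ((-2:ℝ)) = -((2:ℕ):ℝ) by norm_num, Real.rpow_neg hc.le,
        Real.rpow_natCast, div_eq_mul_inv]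
    rw [smul_eq_mul, h1, abs_of_nonneg (by positivity), e1, e2, e3]
    rw [show (2:ℝ) * y^(1:ℝ) * c^(-2:ℝ) * (y^(2*(u-1)) * c^(-(u-1)) * c^(-(v-1)))
        = 2 * ((y^(1:ℝ) * y^(2*(u-1))) * (c^(-2:ℝ) * c^(-(u-1)) * c^(-(v-1)))) from by ring]
    rw [← Real.rpow_add hy, ← Real.rpow_add hc, ← Real.rpow_add hc]
    rw [show (1:ℝ)+2*(u-1) = 2*u-1 by ring, show (-2:ℝ) + -(u-1) + -(v-1) = -(u+v) by ring]
  rw [setIntegral_congr_fun measurableSet_Ioi ptwise, integral_const_mul] at key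
  have hG : Gamma (u+v) ≠ 0 := (Real.Gamma_pos_of_pos (by linarith)).ne'
  field_simp at key ⊢
  linarith

private lemma escort_eucl_int {d : ℕ} (hd : 1 ≤ d) {s : ℝ} (hs : (d:ℝ)/2 < s) :
    ∫ x : EuclideanSpace ℝ (Fin d), (1 + ‖x‖^2) ^ (-s)
      = π ^ ((d:ℝ)/2) * Gamma (s - d/2) / Gamma s := by
  haveI : NeZero d := ⟨by omega⟩
  haveI : Nontrivial (EuclideanSpace ℝ (Fin d)) := by
    exact (PiLp.continuousLinearEquiv 2 ℝ (fun _ : Fin d => ℝ)).toEquiv.nontrivial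
  have hdim : finrank ℝ (EuclideanSpace ℝ (Fin d)) = d := finrank_euclideanSpace_fin
  have key := integral_fun_norm_addHaar (volume : Measure (EuclideanSpace ℝ (Fin d)))
    (fun y : ℝ => (1 + y^2) ^ (-s))
  rw [hdim] at key
  have hu : 0 < (d:ℝ)/2 := by positivity
  have hv : 0 < s - (d:ℝ)/2 := by linarith
  have hs0 : 0 < s := lt_of_le_of_lt (by positivity) hs
  have ptw : ∀ y ∈ Ioi (0:ℝ), y^(d-1) • ((1+y^2)^(-s) : ℝ)
      = y ^ (2*((d:ℝ)/2)-1) * (1+y^2) ^ (-((d:ℝ)/2 + (s-(d:ℝ)/2))) := by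
    intro y hy
    have hy : (0:ℝ) < y := hy
    rw [smul_eq_mul, show 2*((d:ℝ)/2)-1 = ((d-1:ℕ):ℝ) by
        rw [Nat.cast_sub hd]; push_cast; ring,
      Real.rpow_natCast, show -((d:ℝ)/2 + (s-(d:ℝ)/2)) = -s by ring]
  have rad : (∫ y in Ioi (0:ℝ), y^(d-1) • ((1+y^2)^(-s) : ℝ))
      = Gamma ((d:ℝ)/2) * Gamma (s-(d:ℝ)/2) / (2 * Gamma s) := by
    rw [setIntegral_congr_fun measurableSet_Ioi ptw, escort_beta_Ioi hu hv,
      show (d:ℝ)/2 + (s-(d:ℝ)/2) = s by ring]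
  rw [rad, measureReal_def, EuclideanSpace.volume_ball, Fintype.card_fin] at key
  simp only [ENNReal.ofReal_one, one_pow, one_mul,
    ENNReal.toReal_ofReal (by positivity : (0:ℝ) ≤ Real.sqrt π ^ d / Gamma ((d:ℝ)/2+1))] at key
  rw [key, nsmul_eq_mul, smul_eq_mul]
  have hsq : Real.sqrt π ^ d = π ^ ((d:ℝ)/2) := by
    rw [Real.sqrt_eq_rpow, ← Real.rpow_natCast (π ^ ((1:ℝ)/2)) d, ← Real.rpow_mul pi_pos.le]
    norm_num
    rw [show (1:ℝ)/2 * (d:ℝ) = (d:ℝ)/2 by ring]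
  have hGadd : Gamma ((d:ℝ)/2+1) = ((d:ℝ)/2) * Gamma ((d:ℝ)/2) := Real.Gamma_add_one hu.ne'
  have hg1 : Gamma ((d:ℝ)/2) ≠ 0 := (Real.Gamma_pos_of_pos hu).ne'
  have hg2 : Gamma s ≠ 0 := (Real.Gamma_pos_of_pos hs0).ne'
  rw [hsq, hGadd]
  have hd0 : (d:ℝ) ≠ 0 := by positivity
  field_simp

private lemma escort_pi_int {d : ℕ} (hd : 1 ≤ d) {s : ℝ} (hs : (d:ℝ)/2 < s) :
    ∫ x : Fin d → ℝ, (1 + x ⬝ᵥ x) ^ (-s)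
      = π ^ ((d:ℝ)/2) * Gamma (s - d/2) / Gamma s := by
  have mp := EuclideanSpace.volume_preserving_symm_measurableEquiv_toLp (Fin d)
  rw [← mp.integral_comp (MeasurableEquiv.toLp 2 (Fin d → ℝ)).symm.measurableEmbedding
    (fun x : Fin d → ℝ => (1 + x ⬝ᵥ x) ^ (-s)), ← escort_eucl_int hd hs]
  congr 1
  funext x
  congr 2
  have : ((MeasurableEquiv.toLp 2 (Fin d → ℝ)).symm) x = WithLp.ofLp x := rfl
  rw [this, EuclideanSpace.norm_eq, dotProduct]
  rw [Real.sq_sqrt (by positivity)]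
  congr 1
  funext i
  rw [Real.norm_eq_abs, sq_abs, sq]

open scoped MatrixOrder in
private lemma escort_quad_int {d : ℕ} (hd : 1 ≤ d) {ν : ℝ} (hν : 0 < ν) (μ : Fin d → ℝ)
    {T : Matrix (Fin d) (Fin d) ℝ} (hT : T.PosDef) {s : ℝ} (hs : (d:ℝ)/2 < s) :
    ∫ x : Fin d → ℝ, (1 + ν⁻¹ * ((x - μ) ⬝ᵥ T⁻¹.mulVec (x - μ))) ^ (-s)
      = Real.sqrt T.det * ν ^ ((d:ℝ)/2)
        * (π ^ ((d:ℝ)/2) * Gamma (s - d/2) / Gamma s) := by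
  classical
  set B := CFC.sqrt T with hBdef
  have hB : B * B = T := CFC.sqrt_mul_sqrt_self T hT.posSemidef.nonneg
  have hBsym : Bᵀ = B := by
    have h := (Matrix.nonneg_iff_posSemidef.mp (CFC.sqrt_nonneg T)).1
    simpa [Matrix.IsHermitian, Matrix.conjTranspose_eq_transpose_of_trivial, ← hBdef] using h
  have hdetT : 0 < T.det := hT.det_pos
  have hdetB2 : B.det * B.det = T.det := by rw [← Matrix.det_mul, hB]
  have hdetB : |B.det| = Real.sqrt T.det := by
    rw [← hdetB2, Real.sqrt_mul_self_eq_abs]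
  have hdetB0 : B.det ≠ 0 := by
    intro h
    rw [h, mul_zero] at hdetB2
    exact hdetT.ne (by rw [hdetB2])
  have hBTB : B * T⁻¹ * B = 1 := by
    rw [← hB, Matrix.mul_inv_rev, ← Matrix.mul_assoc, Matrix.mul_assoc B B⁻¹ B⁻¹,
      ← Matrix.mul_assoc B B⁻¹ _]
    rw [Matrix.mul_nonsing_inv B (isUnit_iff_ne_zero.mpr hdetB0), Matrix.one_mul,
      Matrix.nonsing_inv_mul B (isUnit_iff_ne_zero.mpr hdetB0)]
  set A : Matrix (Fin d) (Fin d) ℝ := Real.sqrt ν • B with hAdef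
  have hsqν : Real.sqrt ν ^ d = ν ^ ((d:ℝ)/2) := by
    rw [Real.sqrt_eq_rpow, ← Real.rpow_natCast (ν ^ ((1:ℝ)/2)) d, ← Real.rpow_mul hν.le]
    norm_num
    rw [show (1:ℝ)/2 * (d:ℝ) = (d:ℝ)/2 by ring]
  have hdetA : |A.det| = ν ^ ((d:ℝ)/2) * Real.sqrt T.det := by
    rw [hAdef, Matrix.det_smul, Fintype.card_fin, abs_mul, abs_pow,
      abs_of_nonneg (Real.sqrt_nonneg ν), hsqν, hdetB]
  have hdetA0 : A.det ≠ 0 := by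
    rw [hAdef, Matrix.det_smul, Fintype.card_fin]
    exact mul_ne_zero (pow_ne_zero _ (Real.sqrt_pos.mpr hν).ne') hdetB0
  have hquad : ∀ y : Fin d → ℝ, ν⁻¹ * ((A *ᵥ y) ⬝ᵥ T⁻¹.mulVec (A *ᵥ y)) = y ⬝ᵥ y := by
    intro y
    have hq : (B *ᵥ y) ⬝ᵥ T⁻¹.mulVec (B *ᵥ y) = y ⬝ᵥ y := by
      rw [Matrix.mulVec_mulVec, show B *ᵥ y = Matrix.vecMul y Bᵀ from by
          rw [← Matrix.mulVec_transpose, Matrix.transpose_transpose],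
        hBsym, ← dotProduct_mulVec, Matrix.mulVec_mulVec, ← Matrix.mul_assoc, hBTB,
        Matrix.one_mulVec]
    have h1 : A *ᵥ y = Real.sqrt ν • (B *ᵥ y) := by rw [hAdef, Matrix.smul_mulVec]
    rw [h1, Matrix.mulVec_smul, smul_dotProduct, dotProduct_smul, smul_eq_mul, smul_eq_mul, hq,
      show ν⁻¹ * (Real.sqrt ν * (Real.sqrt ν * (y ⬝ᵥ y)))
        = (ν⁻¹ * (Real.sqrt ν * Real.sqrt ν)) * (y ⬝ᵥ y) from by ring,
      Real.mul_self_sqrt hν.le, inv_mul_cancel₀ hν.ne', one_mul]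
  set F : (Fin d → ℝ) → ℝ :=
    fun x => (1 + ν⁻¹ * ((x - μ) ⬝ᵥ T⁻¹.mulVec (x - μ))) ^ (-s) with hFdef
  have hQnn : ∀ z : Fin d → ℝ, 0 ≤ z ⬝ᵥ T⁻¹.mulVec z := by
    intro z
    by_cases hz : z = 0
    · simp [hz]
    · have := hT.inv.dotProduct_mulVec_pos hz
      simpa using this.le
  have hbase : ∀ z : Fin d → ℝ, 0 < 1 + ν⁻¹ * (z ⬝ᵥ T⁻¹.mulVec z) := by
    intro z
    have h1 := hQnn z
    have h2 : 0 ≤ ν⁻¹ := inv_nonneg.mpr hν.le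
    nlinarith
  have hcont : Continuous F := by
    apply Continuous.rpow_const
    · have hsub : Continuous fun x : Fin d → ℝ => x - μ :=
        continuous_id.sub continuous_const
      have hdot : Continuous fun z : Fin d → ℝ => z ⬝ᵥ T⁻¹.mulVec z := by
        simp only [dotProduct, Matrix.mulVec]
        apply continuous_finset_sum
        intro i _
        exact (continuous_apply i).mul
          (continuous_finset_sum _ fun j _ => continuous_const.mul (continuous_apply j))
      exact (continuous_const.add (continuous_const.mul (hdot.comp hsub)))
    · intro x
      exact Or.inl (hbase (x - μ)).ne'
  have hmeasL : Measurable (Matrix.toLin' A) :=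
    (LinearMap.continuous_of_finiteDimensional _).measurable
  have step1 : ∫ z, F (z + μ) ∂(Measure.map (Matrix.toLin' A) volume)
      = ∫ y, F (Matrix.toLin' A y + μ) :=
    integral_map hmeasL.aemeasurable
      ((hcont.comp (continuous_id.add continuous_const)).aestronglyMeasurable)
  have hmap := Real.map_linearMap_volume_pi_eq_smul_volume_pi (f := Matrix.toLin' A)
    (by rw [LinearMap.det_toLin']; exact hdetA0)
  rw [hmap, integral_smul_measure, ENNReal.toReal_ofReal (abs_nonneg _),
    integral_add_right_eq_self, LinearMap.det_toLin'] at step1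
  have ptw : ∀ y : Fin d → ℝ, F (Matrix.toLin' A y + μ) = (1 + y ⬝ᵥ y) ^ (-s) := by
    intro y
    rw [hFdef]
    simp only [Matrix.toLin'_apply, add_sub_cancel_right]
    rw [hquad y]
  rw [show (∫ y, F (Matrix.toLin' A y + μ)) = ∫ y : Fin d → ℝ, (1 + y ⬝ᵥ y) ^ (-s) from by
      congr 1; funext y; exact ptw y, escort_pi_int hd hs] at step1
  have habs : |A.det⁻¹| = (ν ^ ((d:ℝ)/2) * Real.sqrt T.det)⁻¹ := by
    rw [abs_inv, hdetA]
  rw [habs, smul_eq_mul] at step1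
  have hpos : 0 < ν ^ ((d:ℝ)/2) * Real.sqrt T.det := by positivity
  rw [inv_mul_eq_iff_eq_mul₀ hpos.ne'] at step1
  rw [show (∫ x : Fin d → ℝ, (1 + ν⁻¹ * ((x - μ) ⬝ᵥ T⁻¹.mulVec (x - μ))) ^ (-s))
    = ∫ x, F x from rfl, step1]
  ring

end EscortAux

/-- The `d`-dimensional Student density with `ν` degrees of freedom, location `μ`
and shape matrix `S`, with normalizing constant
`Z_ν = Γ(ν/2) ν^{d/2} π^{d/2} / Γ((ν+d)/2)`. -/
noncomputable def studentDensity (d : ℕ) (ν : ℝ) (μ : Fin d → ℝ)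
    (S : Matrix (Fin d) (Fin d) ℝ) (x : Fin d → ℝ) : ℝ :=
  (Real.Gamma ((ν + d) / 2) / (Real.Gamma (ν / 2) * ν ^ ((d : ℝ) / 2) * Real.pi ^ ((d : ℝ) / 2)))
    * S.det ^ (-(1 : ℝ) / 2)
    * (1 + ν⁻¹ * ((x - μ) ⬝ᵥ S⁻¹.mulVec (x - μ))) ^ (-((ν + d) / 2))

/-- Proposition 4: the escort `p^{(α)} ∝ p^α` of a Student density with `ν_p` degrees
of freedom, for `α = 1 + 2/(ν+d)`, is again a Student density with
`ν^{(α)} = ν_p + 2(ν_p+d)/(ν+d)` degrees of freedom, the same location, and shape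
`(ν_p/ν^{(α)}) Σ_p`. -/
theorem escort_student_is_student (d : ℕ) (hd : 1 ≤ d) (νp ν : ℝ) (hνp : 0 < νp) (hν : 0 < ν)
    (μ : Fin d → ℝ) (S : Matrix (Fin d) (Fin d) ℝ) (hS : S.PosDef)
    (α να : ℝ) (hα : α = 1 + 2 / (ν + d)) (hνα : να = νp + 2 * (νp + d) / (ν + d)) :
    ∀ x, (studentDensity d νp μ S x) ^ α / (∫ y, (studentDensity d νp μ S y) ^ α)
      = studentDensity d να μ ((νp / να) • S) x := by
  intro x
  have hd0 : (0:ℝ) < d := by exact_mod_cast hd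
  have hνd : (0:ℝ) < ν + d := by positivity
  have hνα_pos : 0 < να := by rw [hνα]; positivity
  have hc : 0 < νp / να := div_pos hνp hνα_pos
  have hdetS : 0 < S.det := hS.det_pos
  have hexp : -((νp + (d:ℝ)) / 2) * α = -((να + (d:ℝ)) / 2) := by
    rw [hα, hνα]; field_simp; ring
  have hQnn : ∀ z : Fin d → ℝ, 0 ≤ z ⬝ᵥ S⁻¹.mulVec z := by
    intro z
    by_cases hz : z = 0
    · simp [hz]
    · have := hS.inv.dotProduct_mulVec_pos hz
      simpa using this.le
  have hbase : ∀ z : Fin d → ℝ,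
      0 < 1 + νp⁻¹ * ((z - μ) ⬝ᵥ S⁻¹.mulVec (z - μ)) := by
    intro z
    have h1 := hQnn (z - μ)
    have h2 : 0 ≤ νp⁻¹ := inv_nonneg.mpr hνp.le
    nlinarith
  set Kp : ℝ := Real.Gamma ((νp + d) / 2)
    / (Real.Gamma (νp / 2) * νp ^ ((d : ℝ) / 2) * Real.pi ^ ((d : ℝ) / 2)) with hKp
  have hKp_pos : 0 < Kp := by
    rw [hKp]
    apply div_pos (Real.Gamma_pos_of_pos (by positivity))
    have := Real.Gamma_pos_of_pos (show (0:ℝ) < νp/2 by positivity)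
    positivity
  set Dp : ℝ := S.det ^ (-(1 : ℝ) / 2) with hDp
  have hDp_pos : 0 < Dp := Real.rpow_pos_of_pos hdetS _
  have hpow : ∀ z, studentDensity d νp μ S z ^ α
      = (Kp ^ α * Dp ^ α)
        * (1 + νp⁻¹ * ((z - μ) ⬝ᵥ S⁻¹.mulVec (z - μ))) ^ (-((να + (d:ℝ)) / 2)) := by
    intro z
    rw [studentDensity, ← hKp, ← hDp]
    rw [Real.mul_rpow (by positivity) (Real.rpow_nonneg (hbase z).le _),
      Real.mul_rpow hKp_pos.le hDp_pos.le, ← Real.rpow_mul (hbase z).le, hexp]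
  have hs : (d:ℝ)/2 < (να + (d:ℝ))/2 := by linarith
  have hint : (∫ y, studentDensity d νp μ S y ^ α)
      = (Kp ^ α * Dp ^ α) * (Real.sqrt S.det * νp ^ ((d:ℝ)/2)
        * (Real.pi ^ ((d:ℝ)/2) * Real.Gamma (να/2) / Real.Gamma ((να + (d:ℝ))/2))) := by
    rw [show (∫ y, studentDensity d νp μ S y ^ α)
        = ∫ y, (Kp ^ α * Dp ^ α)
          * (1 + νp⁻¹ * ((y - μ) ⬝ᵥ S⁻¹.mulVec (y - μ))) ^ (-((να + (d:ℝ)) / 2)) from by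
      congr 1; funext y; exact hpow y]
    rw [integral_const_mul, escort_quad_int hd hνp μ hS hs,
      show (να + (d:ℝ))/2 - (d:ℝ)/2 = να/2 by ring]
  have hsmul_inv : ((νp/να) • S)⁻¹ = (νp/να)⁻¹ • S⁻¹ := by
    haveI := invertibleOfNonzero hc.ne'
    rw [Matrix.inv_smul (A := S) (νp/να) (isUnit_iff_ne_zero.mpr hdetS.ne'), invOf_eq_inv _]
  have hrhsQ : να⁻¹ * ((x - μ) ⬝ᵥ ((νp/να) • S)⁻¹.mulVec (x - μ))
      = νp⁻¹ * ((x - μ) ⬝ᵥ S⁻¹.mulVec (x - μ)) := by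
    rw [hsmul_inv, Matrix.smul_mulVec, dotProduct_smul, smul_eq_mul]
    field_simp
  have hdet_smul : ((νp/να) • S).det = (νp/να) ^ (d:ℕ) * S.det := by
    rw [Matrix.det_smul, Fintype.card_fin]
  have hdet_rpow : (((νp/να) ^ (d:ℕ) * S.det) : ℝ) ^ (-(1:ℝ)/2)
      = (νp/να) ^ (-(d:ℝ)/2) * Dp := by
    rw [Real.mul_rpow (by positivity) hdetS.le, ← Real.rpow_natCast (νp/να) d,
      ← Real.rpow_mul hc.le, show (d:ℝ) * (-(1:ℝ)/2) = -(d:ℝ)/2 by ring, hDp]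
  rw [hpow x, hint, studentDensity, hrhsQ, hdet_smul, hdet_rpow]
  rw [mul_div_mul_left _ _ (by positivity : (Kp ^ α * Dp ^ α) ≠ 0)]
  have h1 : (νp/να) ^ (-(d:ℝ)/2) = να ^ ((d:ℝ)/2) / νp ^ ((d:ℝ)/2) := by
    rw [show (-(d:ℝ)/2) = -((d:ℝ)/2) by ring, Real.rpow_neg hc.le,
      Real.div_rpow hνp.le hνα_pos.le, inv_div]
  have h2 : Dp = 1 / Real.sqrt S.det := by
    rw [hDp, show (-(1:ℝ)/2) = -((1:ℝ)/2) by ring, Real.rpow_neg hdetS.le,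
      Real.sqrt_eq_rpow]
    norm_num
  rw [h1, h2]
  have hg1 : Real.Gamma (να/2) ≠ 0 := (Real.Gamma_pos_of_pos (by positivity)).ne'
  have hg2 : Real.Gamma ((να + (d:ℝ))/2) ≠ 0 :=
    (Real.Gamma_pos_of_pos (by positivity)).ne'
  have hp1 : (0:ℝ) < Real.pi ^ ((d:ℝ)/2) := Real.rpow_pos_of_pos Real.pi_pos _
  have hp2 : (0:ℝ) < νp ^ ((d:ℝ)/2) := Real.rpow_pos_of_pos hνp _
  have hp3 : (0:ℝ) < να ^ ((d:ℝ)/2) := Real.rpow_pos_of_pos hνα_pos _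
  have hp4 : (0:ℝ) < Real.sqrt S.det := Real.sqrt_pos.mpr hdetS
  field_simp
end

section
/- Let ϑ ∈ ℝ^d × S_{--}^d be a natural parameter of the Student family with 2(ν+d) + ϑ₁ᵀϑ₂⁻¹ϑ₁ > 0, corresponding to (μ, Σ) ∈ ℝ^d × S_{++}^d, with λ = −2/(ν+d) and T(x) = (x, xxᵀ). Then for any pair η = (m, M) ∈ ℝ^d × S^d with M − mmᵀ positive semidefinite (the escort moments of a compatible density), 1 + λ⟨ϑ, η⟩ = (ν + (μ−m)ᵀΣ⁻¹(μ−m) + tr(Σ⁻¹(M − mmᵀ)))/(ν + μᵀΣ⁻¹μ) ≥ ν/(ν + μᵀΣ⁻¹μ) > 0, so c_λ(ϑ, η) is a finite real number. -/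
open Matrix

lemma aux_trace_nonneg {n : ℕ} {A B : Matrix (Fin n) (Fin n) ℝ}
    (hA : A.PosSemidef) (hB : B.PosSemidef) : 0 ≤ (A * B).trace := by
  obtain ⟨k, v, rfl⟩ := Matrix.posSemidef_iff_eq_sum_vecMulVec.mp hB
  rw [Matrix.mul_sum, trace_sum]
  refine Finset.sum_nonneg fun i _ => ?_
  have h := hA.dotProduct_mulVec_nonneg (v i)
  have e : (A * vecMulVec (v i) (star (v i))).trace = star (v i) ⬝ᵥ A *ᵥ v i := by
    simp only [trace, diag_apply, mul_apply, vecMulVec_apply, dotProduct, mulVec,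
      Finset.mul_sum, Pi.star_apply, star_trivial]
    exact Finset.sum_congr rfl fun a _ => Finset.sum_congr rfl fun b _ => by ring
  rw [e]; exact h

lemma aux_trace_vecMulVec {n : ℕ} (A : Matrix (Fin n) (Fin n) ℝ) (m : Fin n → ℝ) :
    (A * vecMulVec m m).trace = m ⬝ᵥ A.mulVec m := by
  simp only [trace, diag_apply, mul_apply, vecMulVec_apply, dotProduct, mulVec,
    Finset.mul_sum]
  exact Finset.sum_congr rfl fun i _ => Finset.sum_congr rfl fun j _ => by ring

/-- Proof computation of Proposition 3(iii): for the Student natural parameters `ϑ`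
associated to `(μ, Σ)`, `λ = −2/(ν+d)`, and escort moments `η = (m, M)` with
`M − mmᵀ` positive semidefinite,
`1 + λ⟨ϑ, η⟩ = (ν + (μ−m)ᵀΣ⁻¹(μ−m) + tr(Σ⁻¹(M − mmᵀ)))/(ν + μᵀΣ⁻¹μ)
            ≥ ν/(ν + μᵀΣ⁻¹μ) > 0`,
so `c_λ(ϑ, η)` is a finite real number. -/
theorem student_coupling_escort_moments_pos (d : ℕ) (ν : ℝ) (hν : 0 < ν)
    (lam : ℝ) (hlam : lam = -2 / (ν + d))
    (μ m : Fin d → ℝ) (S M : Matrix (Fin d) (Fin d) ℝ) (hS : S.PosDef)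
    (hM : (M - vecMulVec m m).PosSemidef)
    (t1 : Fin d → ℝ) (t2 : Matrix (Fin d) (Fin d) ℝ)
    (ht1 : t1 = ((ν + d) / (ν + μ ⬝ᵥ S⁻¹.mulVec μ)) • S⁻¹.mulVec μ)
    (ht2 : t2 = (-((ν + d) / (2 * (ν + μ ⬝ᵥ S⁻¹.mulVec μ)))) • S⁻¹) :
    1 + lam * (t1 ⬝ᵥ m + (t2 * M).trace)
        = (ν + (μ - m) ⬝ᵥ S⁻¹.mulVec (μ - m) + (S⁻¹ * (M - vecMulVec m m)).trace)
            / (ν + μ ⬝ᵥ S⁻¹.mulVec μ)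
    ∧ ν / (ν + μ ⬝ᵥ S⁻¹.mulVec μ) ≤ 1 + lam * (t1 ⬝ᵥ m + (t2 * M).trace)
    ∧ 0 < 1 + lam * (t1 ⬝ᵥ m + (t2 * M).trace) := by
  have hA : (S⁻¹).PosDef := hS.inv
  have hAH : (S⁻¹)ᵀ = S⁻¹ := hA.isHermitian
  have hq : 0 ≤ μ ⬝ᵥ S⁻¹.mulVec μ := by simpa using hA.posSemidef.dotProduct_mulVec_nonneg μ
  have hD : 0 < ν + μ ⬝ᵥ S⁻¹.mulVec μ := by linarith
  have hνd : (0:ℝ) < ν + d := by positivity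
  have hsub : 0 ≤ (μ - m) ⬝ᵥ S⁻¹.mulVec (μ - m) := by
    simpa using hA.posSemidef.dotProduct_mulVec_nonneg (μ - m)
  have htr : 0 ≤ (S⁻¹ * (M - vecMulVec m m)).trace :=
    aux_trace_nonneg hA.posSemidef hM
  have hsym : μ ⬝ᵥ S⁻¹.mulVec m = S⁻¹.mulVec μ ⬝ᵥ m := by
    rw [dotProduct_mulVec, ← mulVec_transpose, hAH]
  have hsym2 : m ⬝ᵥ S⁻¹.mulVec μ = S⁻¹.mulVec μ ⬝ᵥ m := dotProduct_comm _ _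
  have ea : (μ - m) ⬝ᵥ S⁻¹.mulVec (μ - m)
      = μ ⬝ᵥ S⁻¹.mulVec μ - 2 * (S⁻¹.mulVec μ ⬝ᵥ m) + m ⬝ᵥ S⁻¹.mulVec m := by
    simp only [mulVec_sub, sub_dotProduct, dotProduct_sub, hsym, hsym2]
    ring
  have et : (S⁻¹ * (M - vecMulVec m m)).trace
      = (S⁻¹ * M).trace - m ⬝ᵥ S⁻¹.mulVec m := by
    rw [Matrix.mul_sub, trace_sub, aux_trace_vecMulVec]
  have e1 : t1 ⬝ᵥ m
      = ((ν + d) / (ν + μ ⬝ᵥ S⁻¹.mulVec μ)) * (S⁻¹.mulVec μ ⬝ᵥ m) := by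
    rw [ht1, smul_dotProduct]; rfl
  have e2 : (t2 * M).trace
      = -((ν + d) / (2 * (ν + μ ⬝ᵥ S⁻¹.mulVec μ))) * (S⁻¹ * M).trace := by
    rw [ht2, Matrix.smul_mul, trace_smul]; rfl
  have key : 1 + lam * (t1 ⬝ᵥ m + (t2 * M).trace)
      = (ν + (μ - m) ⬝ᵥ S⁻¹.mulVec (μ - m) + (S⁻¹ * (M - vecMulVec m m)).trace)
          / (ν + μ ⬝ᵥ S⁻¹.mulVec μ) := by
    rw [hlam, e1, e2, ea, et]
    set q := μ ⬝ᵥ S⁻¹.mulVec μ with hqdef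
    set a := S⁻¹.mulVec μ ⬝ᵥ m with hadef
    set b := m ⬝ᵥ S⁻¹.mulVec m with hbdef
    set T := (S⁻¹ * M).trace with hTdef
    field_simp
    ring
  refine ⟨key, ?_, ?_⟩
  · rw [key]
    gcongr
    · linarith
  · rw [key]
    exact div_pos (by linarith) hD
end
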